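/- Every palindromic factor of the doubling sequence D∞ of even positive length equals the word aa; equivalently, every palindromic factor of D∞ other than aa has odd length. -/

import Mathlib

namespace PD

/-- The period-doubling substitution on the alphabet `Bool`,
where `false` stands for the letter `a` and `true` for the letter `b`:
`σ(a) = ab`, `σ(b) = aa`. -/
def sub : Bool → List Bool
  | false => [false, true]
  | true  => [false, false]

/-- The substitution applied to a finite word. -/
def subW (w : List Bool) : List Bool := w.flatMap sub

/-- `A m = σ^m(a)`. -/
def A (m : ℕ) : List Bool := subW^[m] [false]

/-- `B m = σ^m(b)`. -/
def B (m : ℕ) : List Bool := subW^[m] [true]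

/-- The doubling sequence `D∞` (0-indexed: `D n` is the `(n+1)`-th letter),
the fixed point of `σ` beginning with `a`; `A m` is a prefix of `A (m+1)`,
and `A (n+1)` has length `2^(n+1) > n`. -/
def D (n : ℕ) : Bool := (A (n + 1)).getD n false

/-- `δ m`, the last letter of `A m`. -/
def delta (m : ℕ) : Bool := (A m).getLastD false

/-- The envelope words (`i ∈ {1,2}`): `E m 1 = A m` minus its last letter,
`E m 2 = A (m-1) ++ (A m` minus its last letter `)`. -/
def E (m i : ℕ) : List Bool :=
  if i = 1 then (A m).dropLast else A (m - 1) ++ (A m).dropLast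

/-- `w` occurs at the (1-indexed) position `j` in the finite word `τ`. -/
def OccursIn (w τ : List Bool) (j : ℕ) : Prop :=
  1 ≤ j ∧ (τ.drop (j - 1)).take w.length = w

/-- `w` occurs at the (1-indexed) position `j` in the doubling sequence. -/
def OccursD (w : List Bool) (j : ℕ) : Prop :=
  1 ≤ j ∧ ∀ k < w.length, D (j - 1 + k) = w.getD k false

/-- `w` is a factor of the doubling sequence. -/
def FactorD (w : List Bool) : Prop := ∃ j, OccursD w j

/-- `L w p`: the (1-indexed) starting position of the `p`-th occurrence of `w`
in the doubling sequence, occurrences being ordered by starting position.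
(Each factor occurs infinitely often, so `Nat.nth` enumerates all occurrences
in increasing order.) -/
noncomputable def L (w : List Bool) (p : ℕ) : ℕ := Nat.nth (OccursD w) (p - 1)

/-- The strict total order on envelope words:
`E m₁ i₁ ⊏ E m₂ i₂` iff `m₁ < m₂`, or `m₁ = m₂` and `i₁ < i₂`. -/
def EnvLt (m₁ i₁ m₂ i₂ : ℕ) : Prop := m₁ < m₂ ∨ (m₁ = m₂ ∧ i₁ < i₂)

/-- `Env(w) = E m i`: the envelope word `E m i` is the `⊏`-minimal envelope
word containing `w` as a factor. -/
def IsEnv (w : List Bool) (m i : ℕ) : Prop :=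
  1 ≤ m ∧ (i = 1 ∨ i = 2) ∧ w <:+: E m i ∧
    ∀ m' i', 1 ≤ m' → (i' = 1 ∨ i' = 2) → EnvLt m' i' m i → ¬ w <:+: E m' i'

/-- The substitution `φ₁(a) = a`, `φ₁(b) = bb`. -/
def phi1 : Bool → List Bool
  | false => [false]
  | true  => [true, true]

/-- `Θ₁ = φ₁(D∞)` (0-indexed): `φ₁(A (n+1))` is a prefix of `Θ₁` of length `> n`. -/
def Theta1 (n : ℕ) : Bool := ((A (n + 1)).flatMap phi1).getD n false

/-- The substitution `φ₂(a) = ab`, `φ₂(b) = acac`, over the alphabet `Fin 3`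
where `0` stands for `a`, `1` for `b` and `2` for `c`. -/
def phi2 : Bool → List (Fin 3)
  | false => [0, 1]
  | true  => [0, 2, 0, 2]

/-- `Θ₂ = φ₂(D∞)` (0-indexed). -/
def Theta2 (n : ℕ) : Fin 3 := ((A (n + 1)).flatMap phi2).getD n 0

/-- `N₁(x,p)`: the number of letters `x` among the first `p` letters of `Θ₁`. -/
def N1 (x : Bool) (p : ℕ) : ℕ := ((List.range p).map Theta1).count x

/-- `N₂(x,p)`: the number of letters `x` among the first `p` letters of `Θ₂`. -/
def N2 (x : Fin 3) (p : ℕ) : ℕ := ((List.range p).map Theta2).count x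

end PD

open PD

section Aux

lemma subW_cons (x : Bool) (t : List Bool) : subW (x :: t) = sub x ++ subW t := by
  simp [subW]

lemma length_subW (w : List Bool) : (subW w).length = 2 * w.length := by
  induction w with
  | nil => simp [subW]
  | cons x t ih =>
    rw [subW_cons, List.length_append, ih]
    cases x <;> simp [sub] <;> ring

lemma A_succ (m : ℕ) : A (m + 1) = subW (A m) :=
  Function.iterate_succ_apply' subW m [false]

lemma length_A (m : ℕ) : (A m).length = 2 ^ m := by
  induction m with
  | zero => simp [A]
  | succ m ih => rw [A_succ, length_subW, ih, pow_succ]; ring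

lemma prefix_subW {u v : List Bool} (h : u <+: v) : subW u <+: subW v := by
  obtain ⟨t, rfl⟩ := h
  exact ⟨subW t, by simp [subW]⟩

lemma A_prefix_succ (m : ℕ) : A m <+: A (m + 1) := by
  induction m with
  | zero => exact ⟨[true], rfl⟩
  | succ m ih =>
    rw [A_succ, A_succ]
    exact prefix_subW ih

lemma A_prefix {m M : ℕ} (h : m ≤ M) : A m <+: A M := by
  induction h with
  | refl => exact List.prefix_rfl
  | step _ ih => exact ih.trans (A_prefix_succ _)

lemma getD_A {m n : ℕ} (hn : n < (A m).length) : (A m).getD n false = D n := by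
  have hn' : n < (A (n + 1)).length := by
    rw [length_A]
    exact lt_of_lt_of_le (Nat.lt_two_pow_self (n := n)) (Nat.pow_le_pow_right (by norm_num) n.le_succ)
  unfold D
  rw [List.getD_eq_getElem _ _ hn, List.getD_eq_getElem _ _ hn']
  rcases le_total m (n + 1) with h | h
  · exact (A_prefix h).getElem hn
  · exact ((A_prefix h).getElem hn').symm

lemma subW_getD {w : List Bool} {k : ℕ} (hk : k < w.length) :
    (subW w).getD (2 * k) false = false ∧
      (subW w).getD (2 * k + 1) false = !(w.getD k false) := by
  induction w generalizing k with
  | nil => simp at hk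
  | cons x t ih =>
    cases k with
    | zero => cases x <;> simp [subW_cons, sub]
    | succ k =>
      have hk' : k < t.length := by simpa using hk
      obtain ⟨h1, h2⟩ := ih hk'
      have hlen : (sub x).length = 2 := by cases x <;> simp [sub]
      constructor
      · rw [subW_cons, List.getD_append_right _ _ _ _ (by omega), hlen]
        have : 2 * (k + 1) - 2 = 2 * k := by omega
        rw [this, h1]
      · rw [subW_cons, List.getD_append_right _ _ _ _ (by omega), hlen]
        have : 2 * (k + 1) + 1 - 2 = 2 * k + 1 := by omega
        rw [this, h2]
        simp

lemma two_lt_pow (k m : ℕ) (h : k < m) : k < 2 ^ m :=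
  lt_of_lt_of_le (Nat.lt_two_pow_self (n := k)) (Nat.pow_le_pow_right (by norm_num) h.le)

lemma D_even (k : ℕ) : D (2 * k) = false := by
  have hk : k < (A (2 * k)).length := by
    rw [length_A]; exact lt_of_lt_of_le (Nat.lt_two_pow_self (n := k))
      (Nat.pow_le_pow_right (by norm_num) (by omega))
  have h1 : 2 * k < (A (2 * k + 1)).length := by rw [length_A]; exact two_lt_pow _ _ (by omega)
  have := (subW_getD hk).1
  rw [← A_succ] at this
  rw [← getD_A h1, this]

lemma D_odd (k : ℕ) : D (2 * k + 1) = !(D k) := by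
  have hk : k < (A (2 * k + 1)).length := by rw [length_A]; exact two_lt_pow _ _ (by omega)
  have h1 : 2 * k + 1 < (A (2 * k + 2)).length := by
    rw [length_A]; exact two_lt_pow _ _ (by omega)
  have := (subW_getD hk).2
  rw [← A_succ] at this
  rw [← getD_A h1]
  rw [show 2 * k + 1 + 1 = 2 * k + 2 from rfl] at this
  rw [this, getD_A hk]

lemma no_bb (k : ℕ) (h0 : D k = true) (h1 : D (k + 1) = true) : False := by
  rcases Nat.even_or_odd k with ⟨j, hj⟩ | ⟨j, hj⟩
  · rw [hj, show j + j = 2 * j by ring, D_even] at h0; exact absurd h0 (by simp)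
  · rw [hj, show 2 * j + 1 + 1 = 2 * (j + 1) by ring, D_even] at h1
    exact absurd h1 (by simp)

lemma consec_eq_false {n : ℕ} (h : D n = D (n + 1)) : D n = false := by
  rcases Nat.even_or_odd n with ⟨j, hj⟩ | ⟨j, hj⟩
  · rw [hj, show j + j = 2 * j by ring, D_even]
  · rw [hj, show 2 * j + 1 + 1 = 2 * (j + 1) by ring, D_even] at h
    rw [hj]; exact h

lemma center_lemma (n : ℕ) (h1 : D (n + 1) = false) (h2 : D (n + 2) = false)
    (he : D n = D (n + 3)) : False := by
  rcases Nat.even_or_odd n with ⟨j, hj⟩ | ⟨j, hj⟩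
  · subst hj
    have hn : D (j + j) = false := by rw [show j + j = 2 * j by ring, D_even]
    rw [hn] at he
    have h3 : D (j + j + 3) = !(D (j + 1)) := by
      rw [show j + j + 3 = 2 * (j + 1) + 1 by ring, D_odd]
    rw [h3] at he
    have hj1 : D (j + 1) = true := by simpa using he.symm
    have hodd : D (j + j + 1) = !(D j) := by
      rw [show j + j + 1 = 2 * j + 1 by ring, D_odd]
    rw [hodd] at h1
    exact no_bb j (by simpa using h1) hj1
  · subst hj
    have hodd : D (2 * j + 1) = !(D j) := D_odd j
    rw [hodd] at he
    have h4 : D (2 * j + 1 + 3) = false := by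
      rw [show 2 * j + 1 + 3 = 2 * (j + 2) by ring, D_even]
    rw [h4] at he
    have hjt : D j = true := by simpa using he
    have h5 : D (2 * j + 1 + 2) = !(D (j + 1)) := by
      rw [show 2 * j + 1 + 2 = 2 * (j + 1) + 1 by ring, D_odd]
    rw [h5] at h2
    exact no_bb j hjt (by simpa using h2)

lemma pal_getD {w : List Bool} (hpal : List.Palindrome w) {k : ℕ} (hk : k < w.length) :
    w.getD k false = w.getD (w.length - 1 - k) false := by
  have hrev := hpal.reverse_eq
  have hk' : w.length - 1 - k < w.length := by omega
  have hkr : k < w.reverse.length := by simpa using hk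
  have h1 : w.reverse.getD k false = w.getD k false := by rw [hrev]
  have h2 : w.reverse.getD k false = w.getD (w.length - 1 - k) false := by
    rw [List.getD_eq_getElem _ _ hkr, List.getD_eq_getElem _ _ hk', List.getElem_reverse]
  rw [← h1, h2]

end Aux

/-- Every palindromic factor of the doubling sequence of even positive length
equals the word `aa`; equivalently, every palindromic factor other than `aa`
has odd length. -/
theorem doubling_palindrome_odd (w : List Bool) (hfac : FactorD w)
    (hpal : List.Palindrome w) (heven : Even w.length) (hpos : 0 < w.length) :
    w = [false, false] := by
  obtain ⟨j, hj1, hocc⟩ := hfac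
  obtain ⟨l, hlen⟩ := heven
  have hl : 1 ≤ l := by omega
  obtain ⟨t, rfl⟩ := Nat.exists_eq_add_of_le hl
  set i := j - 1 with hi
  -- center equality
  have hcen : D (i + t) = D (i + t + 1) := by
    have h1 : D (i + t) = w.getD t false := by
      have := hocc t (by omega); rwa [hi] at this
    have h2 : D (i + t + 1) = w.getD (t + 1) false := by
      have := hocc (t + 1) (by omega)
      rwa [show j - 1 + (t + 1) = i + t + 1 by omega] at this
    have hp := pal_getD hpal (k := t) (by omega)
    rw [show w.length - 1 - t = t + 1 by omega] at hp
    rw [h1, h2, hp]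
  have hcf : D (i + t) = false := consec_eq_false hcen
  have hcf1 : D (i + t + 1) = false := by rw [← hcen, hcf]
  cases t with
  | zero =>
    -- length 2 case
    match w, hlen with
    | [x, y], _ =>
      have hx : D (i + 0) = x := hocc 0 (by omega)
      have hy : D (i + 0 + 1) = y := by
        have := hocc 1 (by omega)
        rwa [show j - 1 + 1 = i + 0 + 1 by omega] at this
      rw [hx] at hcf
      rw [hy] at hcf1
      rw [hcf, hcf1]
  | succ s =>
    exfalso
    have he : D (i + s) = D (i + s + 3) := by
      have h1 : D (i + s) = w.getD s false := by
        have := hocc s (by omega); rwa [hi] at this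
      have h2 : D (i + s + 3) = w.getD (s + 3) false := by
        have := hocc (s + 3) (by omega)
        rwa [show j - 1 + (s + 3) = i + s + 3 by omega] at this
      have hp := pal_getD hpal (k := s) (by omega)
      rw [show w.length - 1 - s = s + 3 by omega] at hp
      rw [h1, h2, hp]
    exact center_lemma (i + s)
      (by rw [show i + s + 1 = i + (s + 1) by ring]; exact hcf)
      (by rw [show i + s + 2 = i + (s + 1) + 1 by ring]; exact hcf1)
      he
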